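/- Let x, y ∈ X and let V ∈ ∂_C P_K(x) be any Clarke generalized Jacobian of the metric projection P_K at x. Then ‖P_K(y) − P_K(x) − V(y − x)‖ ≤ ‖y − x‖. -/
import Mathlib


open RealInnerProductSpace Filter Topology

variable {X : Type*} [NormedAddCommGroup X] [InnerProductSpace ℝ X] [FiniteDimensional ℝ X]

/-- The Clarke generalized Jacobian of a map `F : X → X` at `x`: the convex hull of all
limits of Fréchet derivatives of `F` along sequences of differentiability points
converging to `x`. -/
def clarkeJacobian (F : X → X) (x : X) : Set (X →L[ℝ] X) :=
  convexHull ℝ {V : X →L[ℝ] X | ∃ u : ℕ → X,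
    (∀ k, DifferentiableAt ℝ F (u k)) ∧
    Tendsto u atTop (𝓝 x) ∧
    Tendsto (fun k => fderiv ℝ F (u k)) atTop (𝓝 V)}

/-- `P` is the metric projection onto `K`: `P z` belongs to `K` and is a nearest point
of `K` to `z`. -/
def IsMetricProjection (K : Set X) (P : X → X) : Prop :=
  ∀ z : X, P z ∈ K ∧ ∀ y ∈ K, ‖z - P z‖ ≤ ‖z - y‖

/-- Variational inequality for the metric projection. -/
lemma proj_inner_le {K : Set X} (hconv : Convex ℝ K) {P : X → X}
    (hP : IsMetricProjection K P) (u : X) : ∀ z ∈ K, ⟪u - P u, z - P u⟫ ≤ 0 := by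
  haveI : Nonempty K := ⟨⟨P u, (hP u).1⟩⟩
  have h1 : ‖u - P u‖ = ⨅ w : K, ‖u - w‖ := by
    apply le_antisymm
    · exact le_ciInf fun w => (hP u).2 w w.2
    · have hbdd : BddBelow (Set.range fun w : K => ‖u - w‖) := by
        refine ⟨0, ?_⟩
        rintro b ⟨w, rfl⟩
        exact norm_nonneg _
      exact ciInf_le hbdd ⟨P u, (hP u).1⟩
  exact (norm_eq_iInf_iff_real_inner_le_zero hconv (hP u).1).mp h1

/-- Firm nonexpansiveness of the metric projection, in ball form. -/
lemma proj_firm {K : Set X} (hconv : Convex ℝ K) {P : X → X}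
    (hP : IsMetricProjection K P) (u v : X) :
    ‖(2:ℝ) • (P u - P v) - (u - v)‖ ≤ ‖u - v‖ := by
  have e1 := proj_inner_le hconv hP u (P v) (hP v).1
  have e2 := proj_inner_le hconv hP v (P u) (hP u).1
  have key : ‖P u - P v‖ ^ 2 ≤ ⟪P u - P v, u - v⟫ := by
    have c1 : ⟪P u - P v, u - P u⟫ = -⟪u - P u, P v - P u⟫ := by
      rw [real_inner_comm, show P v - P u = -(P u - P v) by abel, inner_neg_right, neg_neg]
    have c2 : ⟪P u - P v, v - P v⟫ = ⟪v - P v, P u - P v⟫ := real_inner_comm _ _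
    have expand : ⟪P u - P v, u - v⟫ - ‖P u - P v‖ ^ 2
        = ⟪P u - P v, u - P u⟫ - ⟪P u - P v, v - P v⟫ := by
      rw [← real_inner_self_eq_norm_sq, ← inner_sub_right, ← inner_sub_right]
      congr 1
      abel
    rw [c1, c2] at expand
    linarith
  have hsq : ‖(2:ℝ) • (P u - P v) - (u - v)‖ ^ 2 ≤ ‖u - v‖ ^ 2 := by
    rw [norm_sub_sq_real, norm_smul, real_inner_smul_left]
    simp only [Real.norm_ofNat]
    nlinarith [key]
  nlinarith [norm_nonneg ((2:ℝ) • (P u - P v) - (u - v)), norm_nonneg (u - v), hsq]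

/-- Derivative bound at a point of differentiability. -/
lemma proj_deriv_bound {K : Set X} (hconv : Convex ℝ K) {P : X → X}
    (hP : IsMetricProjection K P) {u : X} (hd : DifferentiableAt ℝ P u) (h : X) :
    ‖(2:ℝ) • (fderiv ℝ P u h) - h‖ ≤ ‖h‖ := by
  have hc : Tendsto (fun n : ℕ => ‖(n : ℝ)‖) atTop atTop := by
    simp only [Real.norm_natCast]
    exact tendsto_natCast_atTop_atTop
  have hlim : Tendsto (fun n : ℕ => (n : ℝ) • (P (u + ((n : ℝ))⁻¹ • h) - P u)) atTop
      (𝓝 (fderiv ℝ P u h)) := hd.hasFDerivAt.lim h hc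
  have hb : ∀ n : ℕ,
      ‖(2:ℝ) • ((n : ℝ) • (P (u + ((n : ℝ))⁻¹ • h) - P u)) - h‖ ≤ ‖h‖ := by
    intro n
    rcases Nat.eq_zero_or_pos n with rfl | hn
    · simp
    · have hn' : (0:ℝ) < n := by exact_mod_cast hn
      have hfirm := proj_firm hconv hP (u + ((n : ℝ))⁻¹ • h) u
      rw [add_sub_cancel_left] at hfirm
      set w := P (u + ((n : ℝ))⁻¹ • h) - P u with hw
      have hh : h = (n : ℝ) • (((n : ℝ))⁻¹ • h) := by
        rw [smul_smul, mul_inv_cancel₀ hn'.ne', one_smul]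
      have heq : (2:ℝ) • ((n : ℝ) • w) - h
          = (n : ℝ) • ((2:ℝ) • w - ((n : ℝ))⁻¹ • h) := by
        conv_lhs => rw [hh]
        module
      rw [heq, norm_smul, Real.norm_natCast]
      calc (n : ℝ) * ‖(2:ℝ) • w - ((n : ℝ))⁻¹ • h‖
          ≤ (n : ℝ) * ‖((n : ℝ))⁻¹ • h‖ := mul_le_mul_of_nonneg_left hfirm hn'.le
        _ = ‖h‖ := by
            rw [norm_smul, norm_inv, Real.norm_natCast, ← mul_assoc,
              mul_inv_cancel₀ hn'.ne', one_mul]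
  have hlim2 : Tendsto
      (fun n : ℕ => ‖(2:ℝ) • ((n : ℝ) • (P (u + ((n : ℝ))⁻¹ • h) - P u)) - h‖) atTop
      (𝓝 ‖(2:ℝ) • (fderiv ℝ P u h) - h‖) :=
    ((hlim.const_smul (2:ℝ)).sub tendsto_const_nhds).norm
  exact le_of_tendsto hlim2 (Eventually.of_forall hb)

/-- For a Clarke generalized Jacobian `V` of the metric projection at `x`, the linearization
error is bounded: `‖P y − P x − V (y − x)‖ ≤ ‖y − x‖`. -/
theorem clarkeJacobian_proj_linearization_bound
    (K : Set X) (hne : K.Nonempty) (hcl : IsClosed K) (hconv : Convex ℝ K)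
    (hcone : ∀ c : ℝ, 0 ≤ c → ∀ y ∈ K, c • y ∈ K)
    (P : X → X) (hP : IsMetricProjection K P)
    (x y : X) (V : X →L[ℝ] X) (hV : V ∈ clarkeJacobian P x) :
    ‖P y - P x - V (y - x)‖ ≤ ‖y - x‖ := by
  set S : Set (X →L[ℝ] X) := {A : X →L[ℝ] X | ∀ h : X, ‖(2:ℝ) • (A h) - h‖ ≤ ‖h‖} with hS
  have hSconv : Convex ℝ S := by
    intro A hA B hB s t hs ht hst h
    have heq : (2:ℝ) • ((s • A + t • B) h) - h
        = s • ((2:ℝ) • (A h) - h) + t • ((2:ℝ) • (B h) - h) := by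
      simp only [ContinuousLinearMap.add_apply, ContinuousLinearMap.coe_smul',
        Pi.smul_apply]
      rw [show s • ((2:ℝ) • (A h) - h) + t • ((2:ℝ) • (B h) - h)
          = (2:ℝ) • (s • A h + t • B h) - (s + t) • h from by module, hst, one_smul]
    rw [heq]
    calc ‖s • ((2:ℝ) • (A h) - h) + t • ((2:ℝ) • (B h) - h)‖
        ≤ ‖s • ((2:ℝ) • (A h) - h)‖ + ‖t • ((2:ℝ) • (B h) - h)‖ := norm_add_le _ _
      _ ≤ s * ‖h‖ + t * ‖h‖ := by
          rw [norm_smul, norm_smul, Real.norm_eq_abs, Real.norm_eq_abs,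
            abs_of_nonneg hs, abs_of_nonneg ht]
          gcongr
          · exact hA h
          · exact hB h
      _ = ‖h‖ := by rw [← add_mul, hst, one_mul]
  have hGS : {W : X →L[ℝ] X | ∃ u : ℕ → X,
      (∀ k, DifferentiableAt ℝ P (u k)) ∧
      Tendsto u atTop (𝓝 x) ∧
      Tendsto (fun k => fderiv ℝ P (u k)) atTop (𝓝 W)} ⊆ S := by
    rintro W ⟨u, hdiff, -, hten⟩ h
    have happ : Tendsto (fun k => (fderiv ℝ P (u k)) h) atTop (𝓝 (W h)) :=
      ((ContinuousLinearMap.apply ℝ X h).continuous.tendsto W).comp hten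
    have hlim2 : Tendsto (fun k => ‖(2:ℝ) • ((fderiv ℝ P (u k)) h) - h‖) atTop
        (𝓝 ‖(2:ℝ) • (W h) - h‖) :=
      ((happ.const_smul (2:ℝ)).sub tendsto_const_nhds).norm
    exact le_of_tendsto hlim2
      (Eventually.of_forall fun k => proj_deriv_bound hconv hP (hdiff k) h)
  have hVS : V ∈ S := convexHull_min hGS hSconv hV
  have h1 := proj_firm hconv hP y x
  have h2 := hVS (y - x)
  have key : (2:ℝ) • (P y - P x - V (y - x))
      = ((2:ℝ) • (P y - P x) - (y - x)) - ((2:ℝ) • (V (y - x)) - (y - x)) := by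
    module
  have hfin : ‖(2:ℝ) • (P y - P x - V (y - x))‖ ≤ 2 * ‖y - x‖ := by
    rw [key]
    calc ‖((2:ℝ) • (P y - P x) - (y - x)) - ((2:ℝ) • (V (y - x)) - (y - x))‖
        ≤ ‖(2:ℝ) • (P y - P x) - (y - x)‖ + ‖(2:ℝ) • (V (y - x)) - (y - x)‖ :=
          norm_sub_le _ _
      _ ≤ 2 * ‖y - x‖ := by linarith
  rw [norm_smul, Real.norm_ofNat] at hfin
  linarith
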